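/- Window characterization: let w be an evaluation model whose time map is strictly increasing, and let p be a finite sequence of pairs (t, v) ∈ ℕ × 𝕍 whose timestamps are strictly increasing. Then for every real t_start ∈ ℝ, window(w, p, t_start) is a suffix of p and contains exactly those pairs (t, v) of p with w(t) > t_start. -/

import Mathlib

namespace RTLola

open Classical in
/-- Helper for `window`, working on the reversed sequence: keep elements as long as their
real time exceeds `tstart`. -/
noncomputable def windowRevAux {V : Type} (time : ℕ → ℝ) (tstart : ℝ) :
    List (ℕ × V) → List (ℕ × V)
  | [] => []
  | tv :: rest => if tstart < time tv.1 then tv :: windowRevAux time tstart rest else []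

/-- The window of a sequence `p` of timestamped values, defined recursively from the right:
`window (p' · (t,v)) tstart = window p' tstart · (t,v)` if `time t > tstart`, and `ε`
otherwise. -/
noncomputable def window {V : Type} (time : ℕ → ℝ) (p : List (ℕ × V)) (tstart : ℝ) :
    List (ℕ × V) :=
  (windowRevAux time tstart p.reverse).reverse

open Classical in
lemma windowRevAux_spec {V : Type} (time : ℕ → ℝ) (htime : StrictMono time) (tstart : ℝ) :
    ∀ l : List (ℕ × V), (l.map Prod.fst).Pairwise (· > ·) →
      windowRevAux time tstart l <+: l ∧
      (∀ tv : ℕ × V, tv ∈ windowRevAux time tstart l ↔ tv ∈ l ∧ tstart < time tv.1) := by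
  intro l
  induction l with
  | nil => intro _; simp [windowRevAux]
  | cons a rest ih =>
    intro hpw
    simp only [List.map_cons, List.pairwise_cons] at hpw
    obtain ⟨ha, hrest⟩ := ih hpw.2
    by_cases h : tstart < time a.1
    · refine ⟨?_, ?_⟩
      · obtain ⟨t, ht⟩ := ha
        exact ⟨t, by simp [windowRevAux, h, ht]⟩
      · intro tv
        simp only [windowRevAux, if_pos h, List.mem_cons, hrest]
        constructor
        · rintro (rfl | ⟨h1, h2⟩)
          · exact ⟨Or.inl rfl, h⟩
          · exact ⟨Or.inr h1, h2⟩
        · rintro ⟨rfl | h1, h2⟩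
          · exact Or.inl rfl
          · exact Or.inr ⟨h1, h2⟩
    · refine ⟨by simp [windowRevAux, h], ?_⟩
      intro tv
      simp only [windowRevAux, if_neg h, List.not_mem_nil, false_iff, List.mem_cons]
      rintro ⟨rfl | h1, h2⟩
      · exact h h2
      · have : tv.1 < a.1 := hpw.1 tv.1 (List.mem_map_of_mem (f := Prod.fst) h1)
        exact h (h2.trans (htime this))

/-- Window characterization: if the time map of the evaluation model is strictly increasing
and the timestamps of `p` are strictly increasing, then for every real `tstart`,
`window time p tstart` is a suffix of `p` and contains exactly those pairs `(t, v)` of `p`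
with `time t > tstart`. -/
theorem window_characterization {V : Type} (time : ℕ → ℝ) (htime : StrictMono time)
    (p : List (ℕ × V)) (hp : (p.map Prod.fst).Pairwise (· < ·)) (tstart : ℝ) :
    (window time p tstart) <:+ p ∧
    (∀ tv : ℕ × V, tv ∈ window time p tstart ↔ tv ∈ p ∧ tstart < time tv.1) := by
  have hrev : (p.reverse.map Prod.fst).Pairwise (· > ·) := by
    rw [List.map_reverse, List.pairwise_reverse]
    exact hp
  obtain ⟨h1, h2⟩ := windowRevAux_spec time htime tstart p.reverse hrev
  constructor
  · rw [window]
    simpa using List.reverse_suffix.mpr h1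
  · intro tv
    rw [window, List.mem_reverse, h2, List.mem_reverse]

end RTLola
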